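/- For every n ≥ 1, as polynomials in t: Σ_{𝐩=(p₁,…,p_l), |𝐩|=n} ((n−1)!/s_𝐩)·((n−1)!/s_{𝐩'})·(∏_i p_i)·t^l = ∏_{j=1}^{n} (t + j(j−1)), where the sum is over all compositions 𝐩 of n, s_𝐩 = ∏_{j=1}^{l−1}(p₁+⋯+p_j), and 𝐩' = (p_l,…,p₁) is the reversed composition. -/

import Mathlib

open Polynomial Finset

/-- `s_𝐩 = ∏_{j=1}^{l-1} s_j`, the product of the proper left partial sums of a composition. -/
def sProd {n : ℕ} (c : Composition n) : ℕ :=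
  ∏ j ∈ Finset.range (c.length - 1), c.sizeUpTo (j+1)

/-- `s_{𝐩'}` for the reversed composition `𝐩' = (p_l,…,p₁)`: its proper left partial sums are
`n - s_j` for `j = 1,…,l-1`. -/
def sProdRev {n : ℕ} (c : Composition n) : ℕ :=
  ∏ j ∈ Finset.range (c.length - 1), (n - c.sizeUpTo (j+1))

namespace Stmt10Aux

/-- Block lists of compositions of `m`. -/
def cset (m : ℕ) : Finset (List ℕ) :=
  Finset.univ.image (fun c : Composition m => c.blocks)

lemma mem_cset {m : ℕ} {L : List ℕ} :
    L ∈ cset m ↔ (∀ i ∈ L, 0 < i) ∧ L.sum = m := by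
  constructor
  · intro h
    simp only [cset, Finset.mem_image, Finset.mem_univ, true_and] at h
    obtain ⟨c, rfl⟩ := h
    exact ⟨fun i hi => c.blocks_pos hi, c.blocks_sum⟩
  · rintro ⟨h1, h2⟩
    exact Finset.mem_image.2 ⟨⟨L, fun hi => h1 _ hi, h2⟩, Finset.mem_univ _, rfl⟩

lemma sum_comp {M : Type*} [AddCommMonoid M] (m : ℕ) (Φ : List ℕ → M) :
    ∑ c : Composition m, Φ c.blocks = ∑ L ∈ cset m, Φ L := by
  rw [cset, Finset.sum_image]
  intro c _ d _ h
  exact Composition.ext h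

lemma cset_zero : cset 0 = {([] : List ℕ)} := by
  ext L
  simp only [mem_cset, Finset.mem_singleton]
  constructor
  · rintro ⟨h1, h2⟩
    cases L with
    | nil => rfl
    | cons a t =>
      exfalso
      have ha := h1 a List.mem_cons_self
      have : 0 < (a :: t).sum := by
        simp only [List.sum_cons]
        omega
      omega
  · rintro rfl
    exact ⟨by simp, rfl⟩

lemma cset_succ {m : ℕ} (hm : 0 < m) :
    cset m = (Finset.range m).biUnion
      (fun c => (cset c).image (fun L => L ++ [m - c])) := by
  ext L
  simp only [Finset.mem_biUnion, Finset.mem_range, Finset.mem_image, mem_cset]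
  constructor
  · rintro ⟨h1, h2⟩
    have hL : L ≠ [] := by
      rintro rfl
      simp at h2; omega
    refine ⟨L.dropLast.sum, ?_, L.dropLast, ⟨?_, rfl⟩, ?_⟩
    · have := List.sum_append (l₁ := L.dropLast) (l₂ := [L.getLast hL])
      rw [List.dropLast_append_getLast hL] at this
      have hpos := h1 _ (List.getLast_mem hL)
      simp at this
      omega
    · intro i hi
      exact h1 i (List.dropLast_subset L hi)
    · have := List.sum_append (l₁ := L.dropLast) (l₂ := [L.getLast hL])
      rw [List.dropLast_append_getLast hL] at this
      simp at this
      have : m - L.dropLast.sum = L.getLast hL := by omega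
      rw [this]
      exact List.dropLast_append_getLast hL
  · rintro ⟨c, hc, L', ⟨h1, h2⟩, rfl⟩
    constructor
    · intro i hi
      rcases List.mem_append.1 hi with h | h
      · exact h1 i h
      · simp at h
        omega
    · simp [h2]
      omega

lemma peel {M : Type*} [AddCommMonoid M] {m : ℕ} (hm : 0 < m) (Φ : List ℕ → M) :
    ∑ L ∈ cset m, Φ L
      = ∑ c ∈ Finset.range m, ∑ L ∈ cset c, Φ (L ++ [m - c]) := by
  rw [cset_succ hm, Finset.sum_biUnion]
  · refine Finset.sum_congr rfl fun c _ => ?_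
    rw [Finset.sum_image]
    intro a _ b _ h
    exact (List.append_cancel_right h)
  · intro c hc d hd hcd
    have hc' : c < m := by simpa using hc
    have hd' : d < m := by simpa using hd
    refine Finset.disjoint_left.2 fun L hLc hLd => ?_
    simp only [Finset.mem_coe, Finset.mem_image] at hLc hLd
    obtain ⟨a, _, rfl⟩ := hLc
    obtain ⟨b, _, hb⟩ := hLd
    apply hcd
    have := congrArg (fun l => l.getLast?) hb
    simp only [List.getLast?_concat] at this
    injection this with h2
    omega

end Stmt10Aux

namespace Stmt10Aux

noncomputable def pp (L : List ℕ) : ℚ := (L.map (fun p => (p : ℚ))).prod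

noncomputable def den (n : ℕ) (L : List ℕ) (k : ℕ) : ℚ :=
  ∏ j ∈ Finset.range k,
    (((L.take (j+1)).sum : ℚ) * ((n : ℚ) - ((L.take (j+1)).sum : ℚ)))

noncomputable def f (n : ℕ) : ℕ → Polynomial ℚ
  | 0 => 1
  | b+1 =>
    C ((((b : ℚ)+1) * ((n : ℚ) - ((b : ℚ)+1)))⁻¹) * X *
      ∑ c ∈ (Finset.range (b+1)).attach, C (((b : ℚ)+1) - ((c : ℕ) : ℚ)) * f n c
  decreasing_by exact Finset.mem_range.mp c.2

lemma den_zero (n : ℕ) (L : List ℕ) : den n L 0 = 1 := by simp [den]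

lemma pp_append (L : List ℕ) (x : ℕ) : pp (L ++ [x]) = pp L * x := by
  simp [pp]

lemma den_append {L : List ℕ} {k : ℕ} (hk : k ≤ L.length) (x : ℕ) (n : ℕ) :
    den n (L ++ [x]) k = den n L k := by
  unfold den
  refine Finset.prod_congr rfl fun j hj => ?_
  have hj' : j + 1 ≤ L.length := by
    have := Finset.mem_range.1 hj; omega
  rw [List.take_append_of_le_length hj']

lemma den_append_top {L : List ℕ} (x : ℕ) (n : ℕ) :
    den n (L ++ [x]) (L.length + 1)
      = den n L L.length * (((L.sum + x : ℕ) : ℚ) * ((n : ℚ) - ((L.sum + x : ℕ) : ℚ))) := by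
  unfold den
  rw [Finset.prod_range_succ]
  congr 1
  · exact den_append (le_refl _) x n
  · have h1 : (L ++ [x]).take (L.length + 1) = L ++ [x] := by
      apply List.take_of_length_le
      simp
    rw [h1]
    simp

lemma f_eq (n : ℕ) : ∀ b, f n b
    = ∑ L ∈ cset b, C ((den n L L.length)⁻¹ * pp L) * X ^ L.length := by
  intro b
  induction b using Nat.strong_induction_on with
  | _ b ih =>
    match b with
    | 0 =>
      rw [cset_zero]
      simp [f, den_zero, pp]
    | b+1 =>
      rw [f]
      rw [Finset.sum_attach (Finset.range (b+1)) (fun c => C (((b : ℚ)+1) - (c : ℚ)) * f n c)]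
      rw [peel (Nat.succ_pos b)]
      rw [Finset.mul_sum]
      refine Finset.sum_congr rfl fun c hc => ?_
      have hc' : c < b + 1 := Finset.mem_range.1 hc
      rw [ih c hc', Finset.mul_sum, Finset.mul_sum]
      refine Finset.sum_congr rfl fun L hL => ?_
      obtain ⟨hLpos, hLsum⟩ := mem_cset.1 hL
      have hlen : (L ++ [b+1-c]).length = L.length + 1 := by simp
      rw [show b.succ = b + 1 from rfl, hlen, pp_append, den_append_top, hLsum]
      have hsum : c + (b + 1 - c) = b + 1 := by omega
      rw [hsum, pow_succ]
      simp only [mul_inv, C_mul]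
      push_cast [Nat.cast_sub (show c ≤ b + 1 by omega)]
      ring

lemma bridge (n : ℕ) (hn : 0 < n) :
    ∑ L ∈ cset n, C ((den n L (L.length - 1))⁻¹ * pp L) * X ^ L.length
      = ∑ c ∈ Finset.range n, C ((n : ℚ) - (c : ℚ)) * X * f n c := by
  rw [peel hn]
  refine Finset.sum_congr rfl fun c hc => ?_
  have hc' : c < n := Finset.mem_range.1 hc
  rw [f_eq, Finset.mul_sum]
  refine Finset.sum_congr rfl fun L hL => ?_
  obtain ⟨hLpos, hLsum⟩ := mem_cset.1 hL
  have hlen : (L ++ [n-c]).length = L.length + 1 := by simp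
  rw [hlen]
  have hl2 : L.length + 1 - 1 = L.length := by omega
  rw [hl2, pp_append, den_append (le_refl _), pow_succ]
  simp only [mul_inv, C_mul]
  push_cast [Nat.cast_sub (show c ≤ n by omega)]
  ring

noncomputable def g (n a : ℕ) : Polynomial ℚ :=
  ∑ b ∈ Finset.range a, C ((a : ℚ) - (b : ℚ)) * f n b

lemma g_zero (n : ℕ) : g n 0 = 0 := by simp [g]

lemma g_one (n : ℕ) : g n 1 = 1 := by
  simp [g, f]

lemma f_succ (n b : ℕ) :
    f n (b+1) = C ((((b : ℚ)+1) * ((n : ℚ) - ((b : ℚ)+1)))⁻¹) * X * g n (b+1) := by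
  rw [f, Finset.sum_attach (Finset.range (b+1)) (fun c => C (((b : ℚ)+1) - (c : ℚ)) * f n c)]
  unfold g
  congr 1
  refine Finset.sum_congr rfl fun c _ => ?_
  congr 2
  push_cast
  ring

lemma g_pad (n a : ℕ) :
    g n a = ∑ b ∈ Finset.range (a+1), C ((a : ℚ) - (b : ℚ)) * f n b := by
  rw [Finset.sum_range_succ]
  simp [g]

lemma g_rec (n k : ℕ) :
    g n (k+2) = 2 * g n (k+1) - g n k
      + C ((((k : ℚ)+1) * ((n : ℚ) - ((k : ℚ)+1)))⁻¹) * X * g n (k+1) := by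
  rw [← f_succ]
  have h2 : g n (k+2) = ∑ b ∈ Finset.range (k+2), C (((k : ℚ)+2) - (b : ℚ)) * f n b := by
    unfold g
    refine Finset.sum_congr rfl fun b _ => ?_
    congr 2
    push_cast
    ring
  have h1 : g n (k+1) = ∑ b ∈ Finset.range (k+2), C (((k : ℚ)+1) - (b : ℚ)) * f n b := by
    rw [g_pad]
    refine Finset.sum_congr rfl fun b _ => ?_
    congr 2
    push_cast
    ring
  have h0 : g n k = ∑ b ∈ Finset.range k, C ((k : ℚ) - (b : ℚ)) * f n b := rfl
  rw [h2, h1, h0]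
  rw [Finset.sum_range_succ, Finset.sum_range_succ, Finset.sum_range_succ,
    Finset.sum_range_succ]
  have e1 : ∑ x ∈ Finset.range k, C (((k : ℚ)+2) - (x : ℚ)) * f n x
      = ∑ x ∈ Finset.range k,
          (2 * (C (((k : ℚ)+1) - (x : ℚ)) * f n x) - C ((k : ℚ) - (x : ℚ)) * f n x) := by
    refine Finset.sum_congr rfl fun x _ => ?_
    have hC : (C (((k : ℚ)+2) - (x : ℚ)) : Polynomial ℚ)
        = 2 * C (((k : ℚ)+1) - (x : ℚ)) - C ((k : ℚ) - (x : ℚ)) := by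
      rw [show (2 : Polynomial ℚ) = C 2 from (C_eq_natCast 2).symm, ← C_mul, ← C_sub]
      congr 1
      ring
    rw [hC]
    ring
  rw [e1, Finset.sum_sub_distrib, ← Finset.mul_sum]
  have ck : (((k : ℚ)+2) - ((k : ℚ))) = 2 := by ring
  have ck1 : (((k : ℚ)+2) - (((k+1) : ℕ) : ℚ)) = 1 := by push_cast; ring
  have dk : (((k : ℚ)+1) - ((k : ℚ))) = 1 := by ring
  have dk1 : (((k : ℚ)+1) - (((k+1) : ℕ) : ℚ)) = 0 := by push_cast; ring
  rw [ck, ck1, dk, dk1]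
  simp only [C_0, C_1]
  rw [show (C (2:ℚ) : Polynomial ℚ) = 2 from C_eq_natCast 2]
  ring

end Stmt10Aux

namespace Stmt10Aux

lemma g_coeff_zero (n : ℕ) : ∀ a k, a ≤ k → (g n a).coeff k = 0 := by
  intro a
  induction a using Nat.strong_induction_on with
  | _ a ih =>
    match a with
    | 0 => intro k _; rw [g_zero]; simp
    | 1 =>
      intro k hk
      rw [g_one]
      rw [Polynomial.coeff_one]
      simp only [ite_eq_right_iff]
      omega
    | (a+2) =>
      intro k hk
      rw [g_rec]
      obtain ⟨k', rfl⟩ : ∃ k', k = k' + 1 := ⟨k - 1, by omega⟩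
      simp only [Polynomial.coeff_add, Polynomial.coeff_sub]
      rw [mul_assoc (C _) X, Polynomial.coeff_C_mul, Polynomial.coeff_X_mul,
        show (2 : Polynomial ℚ) = C 2 from (C_eq_natCast 2).symm, Polynomial.coeff_C_mul]
      rw [ih (a+1) (by omega) (k'+1) (by omega), ih a (by omega) (k'+1) (by omega),
        ih (a+1) (by omega) k' (by omega)]
      simp

lemma g_lead (n : ℕ) : ∀ a, (g n (a+1)).coeff a
    = ∏ b ∈ Finset.Icc 1 a, (((b : ℚ)) * ((n : ℚ) - (b : ℚ)))⁻¹ := by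
  intro a
  induction a with
  | zero => rw [g_one]; simp
  | succ a ih =>
    rw [g_rec]
    simp only [Polynomial.coeff_add, Polynomial.coeff_sub]
    rw [mul_assoc (C _) X, Polynomial.coeff_C_mul, Polynomial.coeff_X_mul,
      show (2 : Polynomial ℚ) = C 2 from (C_eq_natCast 2).symm, Polynomial.coeff_C_mul]
    rw [g_coeff_zero n (a+1) (a+1) le_rfl, g_coeff_zero n a (a+1) (by omega), ih]
    rw [Finset.prod_Icc_succ_top (by omega : 1 ≤ a + 1)]
    push_cast
    ring

end Stmt10Aux

namespace Stmt10Aux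

/-- coefficients of the Hahn-type eigenpolynomial -/
noncomputable def cc (n j : ℕ) (i : ℕ) : ℚ :=
  ∏ m ∈ Finset.Ico 1 i,
    (((m : ℚ) - (j : ℚ)) * ((m : ℚ) + (j : ℚ) - 1) / ((m : ℚ) * ((n : ℚ) - (m : ℚ))))

/-- the eigenfunction evaluated at a natural number -/
noncomputable def vv (n j : ℕ) (a : ℕ) : ℚ :=
  ∑ i ∈ Finset.range j, cc n j (i+1) * ((a.choose (i+1) : ℕ) : ℚ)

lemma cc_one (n j : ℕ) : cc n j 1 = 1 := by simp [cc]

lemma cc_rec (n j i : ℕ) (hi : 1 ≤ i) :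
    cc n j (i+1) = cc n j i *
      (((i : ℚ) - (j : ℚ)) * ((i : ℚ) + (j : ℚ) - 1) / ((i : ℚ) * ((n : ℚ) - (i : ℚ)))) := by
  rw [cc, cc, Finset.prod_Ico_succ_top hi]

lemma vv_zero (n j : ℕ) : vv n j 0 = 0 := by
  simp [vv, Nat.choose_eq_zero_of_lt (Nat.succ_pos _)]

lemma vv_one (n j : ℕ) (hj : 1 ≤ j) : vv n j 1 = 1 := by
  rw [vv]
  rw [Finset.sum_eq_single_of_mem 0 (Finset.mem_range.2 (by omega))]
  · simp [cc_one]
  · intro i _ hi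
    have : 1 < i + 1 := by omega
    rw [Nat.choose_eq_zero_of_lt this]
    simp

/-- key binomial identity in ℚ -/
lemma binom_key (n : ℕ) (a κ : ℕ) (ha : 1 ≤ a) (hκ : 1 ≤ κ) :
    (a : ℚ) * ((n : ℚ) - (a : ℚ)) * (((a-1).choose (κ-1) : ℕ) : ℚ)
      = -(((κ : ℚ)+1) * (κ : ℚ)) * ((a.choose (κ+1) : ℕ) : ℚ)
        + (κ : ℚ) * ((n : ℚ) - (κ : ℚ)) * ((a.choose κ : ℕ) : ℚ) := by
  have h1 : (a : ℚ) * (((a-1).choose (κ-1) : ℕ) : ℚ) = (κ : ℚ) * ((a.choose κ : ℕ) : ℚ) := by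
    have := Nat.add_one_mul_choose_eq (a-1) (κ-1)
    have ha' : a - 1 + 1 = a := by omega
    have hκ' : κ - 1 + 1 = κ := by omega
    rw [ha', hκ'] at this
    have hq : ((a * (a-1).choose (κ-1) : ℕ) : ℚ) = ((a.choose κ * κ : ℕ) : ℚ) := by
      exact_mod_cast congrArg (fun x : ℕ => (x : ℚ)) this
    push_cast at hq
    linarith [hq]
  have h2 : (a : ℚ) * ((a.choose κ : ℕ) : ℚ)
      = ((κ : ℚ)+1) * ((a.choose (κ+1) : ℕ) : ℚ) + (κ : ℚ) * ((a.choose κ : ℕ) : ℚ) := by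
    by_cases hle : κ ≤ a
    · have := Nat.choose_succ_right_eq a κ
      have hcast : ((a.choose (κ+1) * (κ+1) : ℕ) : ℚ) = ((a.choose κ * (a - κ) : ℕ) : ℚ) := by
        exact_mod_cast congrArg (fun x : ℕ => (x : ℚ)) this
      push_cast [Nat.cast_sub hle] at hcast
      linarith [hcast]
    · have h3 : a.choose κ = 0 := Nat.choose_eq_zero_of_lt (by omega)
      have h4 : a.choose (κ+1) = 0 := Nat.choose_eq_zero_of_lt (by omega)
      rw [h3, h4]
      simp
  have expand : (a : ℚ) * ((n : ℚ) - (a : ℚ)) * (((a-1).choose (κ-1) : ℕ) : ℚ)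
      = ((n : ℚ) - (a : ℚ)) * ((a : ℚ) * (((a-1).choose (κ-1) : ℕ) : ℚ)) := by ring
  rw [expand, h1]
  have : ((n : ℚ) - (a : ℚ)) * ((κ : ℚ) * ((a.choose κ : ℕ) : ℚ))
      = (n : ℚ) * (κ : ℚ) * ((a.choose κ : ℕ) : ℚ)
        - (κ : ℚ) * ((a : ℚ) * ((a.choose κ : ℕ) : ℚ)) := by ring
  rw [this, h2]
  ring

end Stmt10Aux

namespace Stmt10Aux

lemma eigen (n J k : ℕ) (hJ : 1 ≤ J) (hjn : J + 1 ≤ n) (hk : k + 2 ≤ n) :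
    ((k : ℚ)+1) * ((n : ℚ) - ((k : ℚ)+1))
        * (vv n (J+1) (k+2) - 2 * vv n (J+1) (k+1) + vv n (J+1) k)
      = -(((J : ℚ)+1) * (J : ℚ)) * vv n (J+1) (k+1) := by
  set jq : ℚ := (J : ℚ) + 1 with hjq
  -- second difference
  have hΔ : vv n (J+1) (k+2) - 2 * vv n (J+1) (k+1) + vv n (J+1) k
      = ∑ i ∈ Finset.range J, cc n (J+1) (i+2) * ((k.choose i : ℕ) : ℚ) := by
    have d1 : vv n (J+1) (k+2) - vv n (J+1) (k+1)
        = ∑ i ∈ Finset.range (J+1), cc n (J+1) (i+1) * (((k+1).choose i : ℕ) : ℚ) := by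
      rw [vv, vv, ← Finset.sum_sub_distrib]
      refine Finset.sum_congr rfl fun i _ => ?_
      rw [← mul_sub]
      congr 1
      have := Nat.choose_succ_succ (k+1) i
      have hc : (((k+2).choose (i+1) : ℕ) : ℚ)
          = (((k+1).choose i : ℕ) : ℚ) + (((k+1).choose (i+1) : ℕ) : ℚ) := by
        exact_mod_cast congrArg (fun x : ℕ => (x : ℚ)) this
      rw [hc]; ring
    have d2 : vv n (J+1) (k+1) - vv n (J+1) k
        = ∑ i ∈ Finset.range (J+1), cc n (J+1) (i+1) * ((k.choose i : ℕ) : ℚ) := by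
      rw [vv, vv, ← Finset.sum_sub_distrib]
      refine Finset.sum_congr rfl fun i _ => ?_
      rw [← mul_sub]
      congr 1
      have := Nat.choose_succ_succ k i
      have hc : (((k+1).choose (i+1) : ℕ) : ℚ)
          = ((k.choose i : ℕ) : ℚ) + ((k.choose (i+1) : ℕ) : ℚ) := by
        exact_mod_cast congrArg (fun x : ℕ => (x : ℚ)) this
      rw [hc]; ring
    have e : vv n (J+1) (k+2) - 2 * vv n (J+1) (k+1) + vv n (J+1) k
        = (vv n (J+1) (k+2) - vv n (J+1) (k+1)) - (vv n (J+1) (k+1) - vv n (J+1) k) := by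
      ring
    rw [e, d1, d2, ← Finset.sum_sub_distrib]
    rw [Finset.sum_range_succ']
    have hF0 : cc n (J+1) (0+1) * (((k+1).choose 0 : ℕ) : ℚ)
        - cc n (J+1) (0+1) * ((k.choose 0 : ℕ) : ℚ) = 0 := by
      simp
    rw [hF0, add_zero]
    refine Finset.sum_congr rfl fun i _ => ?_
    rw [← mul_sub]
    have := Nat.choose_succ_succ k i
    have hc : (((k+1).choose (i+1) : ℕ) : ℚ)
        = ((k.choose i : ℕ) : ℚ) + ((k.choose (i+1) : ℕ) : ℚ) := by
      exact_mod_cast congrArg (fun x : ℕ => (x : ℚ)) this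
    rw [hc]; ring
  rw [hΔ, Finset.mul_sum]
  -- per-term rewrite
  have main : ∑ i ∈ Finset.range J,
        ((k : ℚ)+1) * ((n : ℚ) - ((k : ℚ)+1)) * (cc n (J+1) (i+2) * ((k.choose i : ℕ) : ℚ))
      = ∑ i ∈ Finset.range J,
          ((((i : ℚ)+1) * (i : ℚ) * cc n (J+1) (i+1) * (((k+1).choose (i+1) : ℕ) : ℚ)
            - ((i : ℚ)+2) * ((i : ℚ)+1) * cc n (J+1) (i+2) * (((k+1).choose (i+2) : ℕ) : ℚ))
          - jq * (jq - 1) * (cc n (J+1) (i+1) * (((k+1).choose (i+1) : ℕ) : ℚ))) := by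
    refine Finset.sum_congr rfl fun i hi => ?_
    have hiJ : i + 1 ≤ J := by
      have := Finset.mem_range.1 hi; omega
    have bk := binom_key n (k+1) (i+1) (by omega) (by omega)
    simp only [Nat.add_sub_cancel] at bk
    have hcr := cc_rec n (J+1) (i+1) (by omega)
    have hi1 : ((i : ℚ)+1) ≠ 0 := by positivity
    have hni : (n : ℚ) - ((i : ℚ)+1) ≠ 0 := by
      have h1 : (i : ℚ) + 1 < (n : ℚ) := by
        have : (i : ℕ) + 1 < n := by omega
        exact_mod_cast this
      intro h; linarith
    push_cast at bk hcr ⊢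
    have hc2 : cc n (J+1) (i+2) * (((i : ℚ)+1) * ((n : ℚ) - ((i : ℚ)+1)))
        = cc n (J+1) (i+1) * (((i : ℚ)+1-jq) * ((i : ℚ)+jq)) := by
      rw [hcr]
      have : ((i : ℚ) + 1 - ((J : ℚ)+1)) * ((i : ℚ) + 1 + ((J : ℚ)+1) - 1)
          / (((i : ℚ)+1) * ((n : ℚ) - ((i : ℚ)+1)))
          * (((i : ℚ)+1) * ((n : ℚ) - ((i : ℚ)+1)))
          = ((i : ℚ) + 1 - ((J : ℚ)+1)) * ((i : ℚ) + 1 + ((J : ℚ)+1) - 1) := by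
        field_simp
      rw [mul_assoc]
      rw [this]
      rw [hjq]
      ring
    calc ((k : ℚ)+1) * ((n : ℚ) - ((k : ℚ)+1)) * (cc n (J+1) (i+2) * ((k.choose i : ℕ) : ℚ))
        = cc n (J+1) (i+2) * (((k : ℚ)+1) * ((n : ℚ) - ((k : ℚ)+1)) * ((k.choose i : ℕ) : ℚ)) := by
          ring
      _ = cc n (J+1) (i+2) *
            (-(((i : ℚ)+1+1) * ((i : ℚ)+1)) * (((k+1).choose (i+1+1) : ℕ) : ℚ)
              + (((i : ℚ)+1) * ((n : ℚ) - ((i : ℚ)+1))) * (((k+1).choose (i+1) : ℕ) : ℚ)) := by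
          rw [bk]
      _ = -(((i : ℚ)+2) * ((i : ℚ)+1)) * cc n (J+1) (i+2) * (((k+1).choose (i+2) : ℕ) : ℚ)
            + (cc n (J+1) (i+2) * (((i : ℚ)+1) * ((n : ℚ) - ((i : ℚ)+1))))
              * (((k+1).choose (i+1) : ℕ) : ℚ) := by
          push_cast
          ring_nf
      _ = _ := by
          rw [hc2]
          ring
  rw [main]
  rw [Finset.sum_sub_distrib]
  have tele0 := Finset.sum_range_sub' (fun i => ((i : ℚ)+1) * (i : ℚ) * cc n (J+1) (i+1)
      * (((k+1).choose (i+1) : ℕ) : ℚ)) J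
  have tele : ∑ x ∈ Finset.range J,
      (((x : ℚ)+1) * (x : ℚ) * cc n (J+1) (x+1) * (((k+1).choose (x+1) : ℕ) : ℚ)
        - ((x : ℚ)+2) * ((x : ℚ)+1) * cc n (J+1) (x+2) * (((k+1).choose (x+2) : ℕ) : ℚ))
      = (((0:ℕ) : ℚ)+1) * ((0:ℕ) : ℚ) * cc n (J+1) (0+1) * (((k+1).choose (0+1) : ℕ) : ℚ)
        - (((J : ℚ)+1) * (J : ℚ) * cc n (J+1) (J+1) * (((k+1).choose (J+1) : ℕ) : ℚ)) := by
    rw [← tele0]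
    refine Finset.sum_congr rfl fun x _ => ?_
    simp only [show ∀ y : ℕ, y+1+1 = y+2 from fun _ => rfl]
    push_cast
    ring
  rw [tele]
  have hvv : vv n (J+1) (k+1)
      = (∑ i ∈ Finset.range J, cc n (J+1) (i+1) * (((k+1).choose (i+1) : ℕ) : ℚ))
        + cc n (J+1) (J+1) * (((k+1).choose (J+1) : ℕ) : ℚ) := by
    rw [vv, Finset.sum_range_succ]
  rw [← Finset.mul_sum, hvv]
  push_cast
  ring

end Stmt10Aux

namespace Stmt10Aux

lemma vv_n_zero (n j : ℕ) (hj : 2 ≤ j) (hjn : j ≤ n) : vv n j n = 0 := by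
  set w : ℕ → ℚ := fun κ => cc n j κ * ((n.choose κ : ℕ) : ℚ) with hw
  have hvw : vv n j n = ∑ i ∈ Finset.range j, w (i+1) := rfl
  have wrec : ∀ κ : ℕ, 1 ≤ κ → κ ≤ j - 1 →
      w (κ+1) * ((κ : ℚ) * ((κ : ℚ)+1))
        = w κ * (((κ : ℚ) - (j : ℚ)) * ((κ : ℚ) + (j : ℚ) - 1)) := by
    intro κ h1 h2
    have hchoose := Nat.choose_succ_right_eq n κ
    have hcast : ((n.choose (κ+1) : ℕ) : ℚ) * ((κ : ℚ)+1)
        = ((n.choose κ : ℕ) : ℚ) * ((n : ℚ) - (κ : ℚ)) := by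
      have h5 := congrArg (fun x : ℕ => (x : ℚ)) hchoose
      push_cast [Nat.cast_sub (show κ ≤ n by omega)] at h5
      linarith [h5]
    have hcr := cc_rec n j κ h1
    have hκ0 : (κ : ℚ) ≠ 0 := by
      have : 0 < κ := h1
      positivity
    have hnκ : (n : ℚ) - (κ : ℚ) ≠ 0 := by
      have h3 : (κ : ℕ) < n := by omega
      have : (κ : ℚ) < (n : ℚ) := by exact_mod_cast h3
      intro h; linarith
    have e1 : cc n j (κ+1) * ((κ : ℚ) * ((n : ℚ) - (κ : ℚ)))
        = cc n j κ * (((κ : ℚ) - (j : ℚ)) * ((κ : ℚ) + (j : ℚ) - 1)) := by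
      rw [hcr]
      field_simp
    rw [hw]
    simp only []
    linear_combination (cc n j (κ+1) * (κ : ℚ)) * hcast + ((n.choose κ : ℕ) : ℚ) * e1
  have key : ∀ I : ℕ, I ≤ j - 1 →
      (∑ i ∈ Finset.range I, w (i+1)) * ((j : ℚ) * ((j : ℚ)-1))
        = -((I : ℚ) * ((I : ℚ)+1)) * w (I+1) := by
    intro I
    induction I with
    | zero => intro _; simp
    | succ I ih =>
      intro hI
      have ih' := ih (by omega)
      rw [Finset.sum_range_succ]
      have hwr := wrec (I+1) (by omega) (by omega)
      push_cast at hwr ih' ⊢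
      linear_combination ih' + hwr
  have hfin := key (j-1) le_rfl
  have hj1 : j - 1 + 1 = j := by omega
  have hsplit : ∑ i ∈ Finset.range j, w (i+1)
      = (∑ i ∈ Finset.range (j-1), w (i+1)) + w ((j-1)+1) := by
    rw [← Finset.sum_range_succ, hj1]
  have hcj : ((j - 1 : ℕ) : ℚ) = (j : ℚ) - 1 := by
    push_cast [Nat.cast_sub (show 1 ≤ j by omega)]
    ring
  rw [hvw, hsplit, hj1]
  have hjj : (j : ℚ) * ((j : ℚ) - 1) ≠ 0 := by
    have h2 : (2 : ℚ) ≤ (j : ℚ) := by exact_mod_cast hj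
    intro h
    rcases mul_eq_zero.1 h with h' | h' <;> nlinarith
  rw [hcj] at hfin
  have : ((∑ i ∈ Finset.range (j-1), w (i+1)) + w j) * ((j : ℚ) * ((j : ℚ)-1)) = 0 := by
    rw [add_mul, hfin]
    rw [show (j - 1 : ℕ) + 1 = j from hj1]
    ring
  rcases mul_eq_zero.1 this with h' | h'
  · exact h'
  · exact absurd h' hjj

lemma eval_g_eq_vv (n j : ℕ) (hj : 2 ≤ j) (hjn : j ≤ n) :
    ∀ a, a ≤ n → (g n a).eval (-((j : ℚ) * ((j : ℚ)-1))) = vv n j a := by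
  intro a
  induction a using Nat.strong_induction_on with
  | _ a ih =>
    match a with
    | 0 => intro _; rw [g_zero, vv_zero]; simp
    | 1 => intro _; rw [g_one, vv_one n j (by omega)]; simp
    | (k+2) =>
      intro hk
      rw [g_rec]
      simp only [Polynomial.eval_add, Polynomial.eval_sub, Polynomial.eval_mul,
        Polynomial.eval_C, Polynomial.eval_X, Polynomial.eval_ofNat]
      rw [ih (k+1) (by omega) (by omega), ih k (by omega) (by omega)]
      obtain ⟨J, rfl⟩ : ∃ J, j = J + 1 := ⟨j-1, by omega⟩
      have heig := eigen n J k (by omega) (by omega) hk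
      have hA : ((k : ℚ)+1) * ((n : ℚ) - ((k : ℚ)+1)) ≠ 0 := by
        have h1 : (0 : ℚ) < (k : ℚ) + 1 := by positivity
        have h2 : ((k : ℚ)+1) < (n : ℚ) := by
          have : (k : ℕ) + 1 < n := by omega
          exact_mod_cast this
        intro h
        rcases mul_eq_zero.1 h with h' | h' <;> nlinarith
      have hexp : vv n (J+1) (k+2)
          = 2 * vv n (J+1) (k+1) - vv n (J+1) k
            + (((k : ℚ)+1) * ((n : ℚ) - ((k : ℚ)+1)))⁻¹
              * (-(((J : ℚ)+1) * (J : ℚ)) * vv n (J+1) (k+1)) := by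
        rw [← heig, inv_mul_cancel_left₀ hA]
        ring
      rw [hexp]
      push_cast
      ring

end Stmt10Aux

namespace Stmt10Aux

lemma prod_reflect (n : ℕ) (hn : 1 ≤ n) :
    ∏ b ∈ Finset.Icc 1 (n-1), ((n - b : ℕ) : ℚ) = ∏ b ∈ Finset.Icc 1 (n-1), ((b : ℕ) : ℚ) := by
  apply Finset.prod_nbij' (fun b => n - b) (fun b => n - b)
  · intro a ha
    simp only [Finset.mem_Icc] at ha ⊢
    omega
  · intro a ha
    simp only [Finset.mem_Icc] at ha ⊢
    omega
  · intro a ha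
    simp only [Finset.mem_Icc] at ha
    omega
  · intro a ha
    simp only [Finset.mem_Icc] at ha
    omega
  · intro a ha
    rfl

lemma prod_Icc_one (m : ℕ) : ∏ b ∈ Finset.Icc 1 m, b = m.factorial := by
  rw [← Finset.prod_range_add_one_eq_factorial, ← Finset.Ico_add_one_right_eq_Icc,
    Finset.prod_Ico_eq_prod_range]
  have h1 : m + 1 - 1 = m := by omega
  rw [h1]
  refine Finset.prod_congr rfl fun x _ => by omega

lemma prod_fact (n : ℕ) (hn : 1 ≤ n) :
    ∏ b ∈ Finset.Icc 1 (n-1), ((b : ℚ) * ((n : ℚ) - (b : ℚ)))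
      = (((n-1).factorial : ℕ) : ℚ)^2 := by
  rw [Finset.prod_mul_distrib]
  have h1 : ∏ b ∈ Finset.Icc 1 (n-1), ((b : ℕ) : ℚ) = (((n-1).factorial : ℕ) : ℚ) := by
    rw [← Nat.cast_prod]
    congr 1
    exact prod_Icc_one (n-1)
  have h2 : ∏ b ∈ Finset.Icc 1 (n-1), ((n : ℚ) - (b : ℚ))
      = ∏ b ∈ Finset.Icc 1 (n-1), ((n - b : ℕ) : ℚ) := by
    refine Finset.prod_congr rfl fun b hb => ?_
    have hb' := Finset.mem_Icc.1 hb
    push_cast [Nat.cast_sub (show b ≤ n by omega)]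
    ring
  rw [h1, h2, prod_reflect n hn, h1]
  ring

lemma g_n_eq (n : ℕ) (hn : 1 ≤ n) :
    C ((((n-1).factorial : ℕ) : ℚ)^2) * g n n
      = ∏ j ∈ Finset.Icc 2 n, ((X : Polynomial ℚ) + C ((j : ℚ) * ((j : ℚ) - 1))) := by
  set q : Polynomial ℚ := ∏ j ∈ Finset.Icc 2 n, ((X : Polynomial ℚ) + C ((j : ℚ) * ((j : ℚ) - 1)))
    with hq
  have hqmonic : q.Monic := by
    apply monic_prod_of_monic
    intro j _
    exact monic_X_add_C _
  have hqdeg : q.natDegree = n - 1 := by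
    rw [hq]
    rw [natDegree_prod _ _ (fun j _ => (monic_X_add_C _).ne_zero)]
    have : ∀ j ∈ Finset.Icc 2 n, (X + C ((j : ℚ) * ((j : ℚ) - 1))).natDegree = 1 :=
      fun j _ => natDegree_X_add_C _
    rw [Finset.sum_congr rfl this, Finset.sum_const, smul_eq_mul, mul_one, Nat.card_Icc]
    omega
  set p : Polynomial ℚ := C ((((n-1).factorial : ℕ) : ℚ)^2) * g n n - q with hp
  have hfact : (((n-1).factorial : ℕ) : ℚ) ≠ 0 := by
    exact_mod_cast (n-1).factorial_ne_zero
  have hcoeff : ∀ k, n - 1 ≤ k → p.coeff k = 0 := by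
    intro k hk
    rcases eq_or_lt_of_le hk with h | h
    · rw [hp]
      simp only [Polynomial.coeff_sub, Polynomial.coeff_C_mul]
      rw [← h]
      have hg : (g n n).coeff (n-1) = ∏ b ∈ Finset.Icc 1 (n-1), ((b : ℚ) * ((n : ℚ) - (b : ℚ)))⁻¹ := by
        have := g_lead n (n-1)
        rw [show n - 1 + 1 = n by omega] at this
        exact this
      rw [hg]
      rw [Finset.prod_inv_distrib, prod_fact n hn]
      have hq1 : q.coeff (n-1) = 1 := by
        have := hqmonic.coeff_natDegree
        rw [hqdeg] at this
        exact this
      rw [hq1]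
      rw [mul_inv_cancel₀ (by positivity)]
      ring
    · rw [hp]
      simp only [Polynomial.coeff_sub, Polynomial.coeff_C_mul]
      rw [g_coeff_zero n n k (by omega)]
      rw [Polynomial.coeff_eq_zero_of_natDegree_lt (by omega : q.natDegree < k)]
      ring
  have heval : ∀ j : ℕ, 2 ≤ j → j ≤ n → p.eval (-((j : ℚ) * ((j : ℚ) - 1))) = 0 := by
    intro j hj2 hjn
    rw [hp]
    simp only [Polynomial.eval_sub, Polynomial.eval_mul, Polynomial.eval_C]
    rw [eval_g_eq_vv n j hj2 hjn n le_rfl, vv_n_zero n j hj2 hjn]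
    rw [hq, Polynomial.eval_prod]
    rw [Finset.prod_eq_zero (Finset.mem_Icc.2 ⟨hj2, hjn⟩)]
    · ring
    · simp
  -- p = 0
  have hp0 : p = 0 := by
    by_contra hne
    set s : Finset ℚ := (Finset.Icc 2 n).image (fun j : ℕ => -((j : ℚ) * ((j : ℚ) - 1))) with hs
    have hinj : Set.InjOn (fun j : ℕ => -((j : ℚ) * ((j : ℚ) - 1))) (Finset.Icc 2 n) := by
      intro a ha b hb hab
      simp only [Finset.coe_Icc, Set.mem_Icc] at ha hb
      simp only at hab
      have h1 : (a : ℚ) * ((a : ℚ) - 1) = (b : ℚ) * ((b : ℚ) - 1) := by linarith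
      have h2 : (2 : ℚ) ≤ (a : ℚ) := by exact_mod_cast ha.1
      have h3 : (2 : ℚ) ≤ (b : ℚ) := by exact_mod_cast hb.1
      have : (a : ℚ) = (b : ℚ) := by nlinarith
      exact_mod_cast this
    have hcard : s.card = n - 1 := by
      rw [hs, Finset.card_image_of_injOn hinj, Nat.card_Icc]
      omega
    have hdeg : p.natDegree < s.card := by
      rw [hcard]
      by_contra hge
      push_neg at hge
      have := hcoeff p.natDegree hge
      exact hne (Polynomial.leadingCoeff_eq_zero.1 this)
    have := Polynomial.eq_zero_of_natDegree_lt_card_of_eval_eq_zero' p s ?_ hdeg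
    · exact hne this
    · intro x hx
      rw [hs] at hx
      obtain ⟨j, hj, rfl⟩ := Finset.mem_image.1 hx
      have hj' := Finset.mem_Icc.1 hj
      exact heval j hj'.1 hj'.2
  have := sub_eq_zero.1 hp0
  exact this

end Stmt10Aux


open Stmt10Aux in
theorem stmt10 (n : ℕ) (hn : 1 ≤ n) :
    ∑ c : Composition n,
        C ((((n-1).factorial : ℚ) / (sProd c : ℚ)) * (((n-1).factorial : ℚ) / (sProdRev c : ℚ)) *
            (c.blocks.map (fun p => (p : ℚ))).prod) *
          (X : Polynomial ℚ) ^ c.length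
      = ∏ j ∈ Finset.Icc 1 n, ((X : Polynomial ℚ) + C ((j : ℚ) * ((j : ℚ) - 1))) := by
  have h0 : 0 < n := hn
  have hstep : ∀ c : Composition n,
      C ((((n-1).factorial : ℚ) / (sProd c : ℚ)) * (((n-1).factorial : ℚ) / (sProdRev c : ℚ)) *
            (c.blocks.map (fun p => (p : ℚ))).prod) *
          (X : Polynomial ℚ) ^ c.length
      = C ((((n-1).factorial : ℕ) : ℚ)^2) *
          (C ((den n c.blocks (c.blocks.length - 1))⁻¹ * pp c.blocks)
            * X ^ c.blocks.length) := by
    intro c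
    have hlen : c.blocks.length = c.length := Composition.blocks_length c
    have hsP : ((sProd c : ℕ) : ℚ)
        = ∏ j ∈ Finset.range (c.length - 1), ((c.sizeUpTo (j+1) : ℕ) : ℚ) := by
      rw [sProd, Nat.cast_prod]
    have hsR : ((sProdRev c : ℕ) : ℚ)
        = ∏ j ∈ Finset.range (c.length - 1), ((n : ℚ) - ((c.sizeUpTo (j+1) : ℕ) : ℚ)) := by
      rw [sProdRev, Nat.cast_prod]
      refine Finset.prod_congr rfl fun j _ => ?_
      push_cast [Nat.cast_sub (c.sizeUpTo_le (j+1))]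
      ring
    have hden : den n c.blocks (c.blocks.length - 1)
        = (∏ j ∈ Finset.range (c.length - 1), ((c.sizeUpTo (j+1) : ℕ) : ℚ))
          * (∏ j ∈ Finset.range (c.length - 1), ((n : ℚ) - ((c.sizeUpTo (j+1) : ℕ) : ℚ))) := by
      rw [den, hlen, ← Finset.prod_mul_distrib]
      rfl
    rw [hlen, hsP, hsR, hden]
    conv_rhs => rw [← mul_assoc, ← C_mul]
    congr 2
    rw [div_eq_mul_inv, div_eq_mul_inv, mul_inv]
    rw [show pp c.blocks = (c.blocks.map (fun p => (p : ℚ))).prod from rfl]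
    ring
  rw [Finset.sum_congr rfl (fun c _ => hstep c)]
  rw [sum_comp n (fun L => C ((((n-1).factorial : ℕ) : ℚ)^2) *
      (C ((den n L (L.length - 1))⁻¹ * pp L) * X ^ L.length))]
  rw [← Finset.mul_sum]
  rw [bridge n h0]
  have hXg : ∑ c ∈ Finset.range n, C ((n : ℚ) - (c : ℚ)) * X * f n c
      = X * g n n := by
    rw [g, Finset.mul_sum]
    refine Finset.sum_congr rfl fun c _ => ?_
    ring
  rw [hXg]
  rw [show C ((((n-1).factorial : ℕ) : ℚ)^2) * (X * g n n)
      = X * (C ((((n-1).factorial : ℕ) : ℚ)^2) * g n n) from by ring]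
  rw [g_n_eq n hn]
  have hIcc : Finset.Icc 1 n = insert 1 (Finset.Icc 2 n) := by
    ext x
    simp only [Finset.mem_Icc, Finset.mem_insert]
    omega
  rw [hIcc, Finset.prod_insert (by simp)]
  norm_num
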